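/- arXiv:2208.08720 — 2 statements merged into one kernel-verified Lean document; each statement's English description precedes it below -/
import Mathlib

section
/- Let E : [0,∞) ⇉ ℝᵈ be continuous (Painlevé–Kuratowski) and of locally bounded variations, and let Y : [0,∞) ⇉ ℝᵈ have nonempty compact values with Y(·) measurable and d_H(Y(t), Y(s)) ≤ ∫_s^t ρ(h) dh for all 0 ≤ s ≤ t, where ρ ∈ L¹_loc([0,∞);[0,∞)). Then Ψ(t) := dist(E(t), Y(t)) is continuous and of locally bounded variation on [0,∞). -/
open Filter Metric Set Topology MeasureTheory

noncomputable section

/-- The excess `exc(A|B) = sup_{a ∈ A} dist(a, B)`, valued in `[0,∞]`. -/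
def eexc {X : Type*} [PseudoEMetricSpace X] (A B : Set X) : ENNReal :=
  ⨆ a ∈ A, EMetric.infEdist a B

/-- Painlevé–Kuratowski upper limit of a family of sets along a filter. -/
def setLimsup {α X : Type*} [PseudoEMetricSpace X] (l : Filter α) (S : α → Set X) : Set X :=
  {y | Filter.liminf (fun a => EMetric.infEdist y (S a)) l = 0}

/-- Painlevé–Kuratowski lower limit of a family of sets along a filter. -/
def setLiminf {α X : Type*} [PseudoEMetricSpace X] (l : Filter α) (S : α → Set X) : Set X :=
  {y | Filter.limsup (fun a => EMetric.infEdist y (S a)) l = 0}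

/-- Painlevé–Kuratowski continuity of a tube on a set `I`. -/
def PKContinuousOn {X : Type*} [PseudoEMetricSpace X] (E : ℝ → Set X) (I : Set ℝ) : Prop :=
  ∀ t ∈ I, setLimsup (𝓝[I] t) E ⊆ E t ∧ E t ⊆ setLiminf (𝓝[I] t) E

/-- A set-valued map is of locally bounded variations (Definition 3.2): on every `[a,b] ⊆ I`
the sums `Σ max(exc(E(t_{i+1})∩K | E(t_i)), exc(E(t_i)∩K | E(t_{i+1})))` over compact sets `K`
and finite partitions of `[a,b]` are uniformly bounded. -/
def IsLBV {X : Type*} [PseudoEMetricSpace X] (E : ℝ → Set X) (I : Set ℝ) : Prop :=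
  ∀ a b : ℝ, a ∈ I → b ∈ I → a ≤ b →
    ∃ M : ℝ, ∀ K : Set X, IsCompact K → ∀ (m : ℕ) (t : ℕ → ℝ),
      t 0 = a → t m = b → (∀ i, i < m → t i < t (i + 1)) →
      (∑ i ∈ Finset.range m,
        max (eexc (E (t (i + 1)) ∩ K) (E (t i))) (eexc (E (t i) ∩ K) (E (t (i + 1))))) ≤
        ENNReal.ofReal M

/-- Distance between two sets as a real number. -/
def sdist {X : Type*} [PseudoMetricSpace X] (A B : Set X) : ℝ :=
  sInf (Set.image2 dist A B)

lemma sdist_le {X : Type*} [PseudoMetricSpace X] {A B : Set X} {a b : X}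
    (ha : a ∈ A) (hb : b ∈ B) : sdist A B ≤ dist a b :=
  csInf_le ⟨0, fun _ ⟨a', _, b', _, h⟩ => h ▸ dist_nonneg⟩ (mem_image2_of_mem ha hb)

lemma sdist_exists_lt {X : Type*} [PseudoMetricSpace X] {A B : Set X}
    (hA : A.Nonempty) (hB : B.Nonempty) {ε : ℝ} (hε : 0 < ε) :
    ∃ a ∈ A, ∃ b ∈ B, dist a b < sdist A B + ε := by
  obtain ⟨x, hx, hlt⟩ := Real.lt_sInf_add_pos (Set.Nonempty.image2 (f := dist) hA hB) hε
  obtain ⟨a, ha, b, hb, rfl⟩ := hx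
  exact ⟨a, ha, b, hb, hlt⟩

lemma infEdist_le_eexc {X : Type*} [PseudoEMetricSpace X] {A B : Set X} {a : X}
    (ha : a ∈ A) : EMetric.infEdist a B ≤ eexc A B :=
  le_iSup₂ (f := fun a (_ : a ∈ A) => EMetric.infEdist a B) a ha

lemma eexc_self {X : Type*} [PseudoEMetricSpace X] {A K : Set X} :
    eexc (A ∩ K) A = 0 := by
  refine le_antisymm (iSup₂_le fun a ha => ?_) zero_le
  exact (EMetric.infEdist_zero_of_mem ha.1).le

lemma exists_dist_lt_of_infEdist_ne_top {X : Type*} [PseudoMetricSpace X] {B : Set X} {a : X}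
    (h : EMetric.infEdist a B ≠ ⊤) {ε : ℝ} (hε : 0 < ε) :
    ∃ b ∈ B, dist a b < (EMetric.infEdist a B).toReal + ε := by
  have h1 : EMetric.infEdist a B < ENNReal.ofReal ((EMetric.infEdist a B).toReal + ε) := by
    calc EMetric.infEdist a B = ENNReal.ofReal (EMetric.infEdist a B).toReal := by
          rw [ENNReal.ofReal_toReal h]
      _ < _ :=
          ENNReal.ofReal_lt_ofReal_iff_of_nonneg ENNReal.toReal_nonneg |>.2 (by linarith)
  obtain ⟨b, hb, hlt⟩ := EMetric.infEdist_lt_iff.1 h1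
  exact ⟨b, hb, by rwa [edist_lt_ofReal] at hlt⟩

/-- Key one-sided comparison. -/
lemma sdist_le_sdist_add {X : Type*} [PseudoMetricSpace X] {A A' B B' K : Set X}
    (hexc : eexc (A ∩ K) A' ≠ ⊤) (hdH : EMetric.hausdorffEdist B B' ≠ ⊤)
    (hKsel : ∀ δ : ℝ, 0 < δ → ∃ a ∈ A ∩ K, ∃ b ∈ B, dist a b < sdist A B + δ) :
    sdist A' B' ≤ sdist A B + (eexc (A ∩ K) A').toReal
      + (EMetric.hausdorffEdist B B').toReal := by
  refine le_of_forall_pos_le_add fun δ hδ => ?_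
  have hδ3 : 0 < δ / 3 := by linarith
  obtain ⟨a, haK, b, hb, hab⟩ := hKsel (δ/3) hδ3
  have hia : EMetric.infEdist a A' ≠ ⊤ := fun h =>
    hexc (top_le_iff.1 (h ▸ infEdist_le_eexc haK))
  obtain ⟨a', ha', haa'⟩ := exists_dist_lt_of_infEdist_ne_top hia hδ3
  have hib : EMetric.infEdist b B' ≠ ⊤ := fun h =>
    hdH (top_le_iff.1 (h ▸ EMetric.infEdist_le_hausdorffEdist_of_mem hb))
  obtain ⟨b', hb', hbb'⟩ := exists_dist_lt_of_infEdist_ne_top hib hδ3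
  have h1 : (EMetric.infEdist a A').toReal ≤ (eexc (A ∩ K) A').toReal :=
    ENNReal.toReal_mono hexc (infEdist_le_eexc haK)
  have h2 : (EMetric.infEdist b B').toReal ≤ (EMetric.hausdorffEdist B B').toReal :=
    ENNReal.toReal_mono hdH (EMetric.infEdist_le_hausdorffEdist_of_mem hb)
  calc sdist A' B' ≤ dist a' b' := sdist_le ha' hb'
    _ ≤ dist a' a + dist a b + dist b b' := dist_triangle4 a' a b b'
    _ ≤ _ := by rw [dist_comm a' a]; linarith

/-- Append: extend a strict partition starting at `a` to reach `b`. -/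
lemma chain_sum_le_append (X : ℝ → ℝ → ENNReal) (a b : ℝ) (Mb : ENNReal)
    (hM : ∀ (m : ℕ) (t : ℕ → ℝ), t 0 = a → t m = b → (∀ i, i < m → t i < t (i + 1)) →
      (∑ i ∈ Finset.range m, X (t i) (t (i + 1))) ≤ Mb)
    (m : ℕ) (t : ℕ → ℝ) (h0 : t 0 = a) (hm : t m ≤ b)
    (hs : ∀ i, i < m → t i < t (i + 1)) :
    (∑ i ∈ Finset.range m, X (t i) (t (i + 1))) ≤ Mb := by
  rcases eq_or_lt_of_le hm with he | hlt
  · exact hM m t h0 he hs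
  · set t' : ℕ → ℝ := fun j => if j ≤ m then t j else b with ht'
    have ht'eq : ∀ j, j ≤ m → t' j = t j := fun j hj => by simp [ht', hj]
    have hlast : t' (m + 1) = b := by simp [ht', Nat.not_succ_le_self]
    have key : (∑ i ∈ Finset.range (m + 1), X (t' i) (t' (i + 1))) ≤ Mb := by
      refine hM (m + 1) t' (by rw [ht'eq 0 (Nat.zero_le m)]; exact h0) hlast ?_
      intro i hi
      rcases Nat.lt_or_ge i m with h | h
      · rw [ht'eq i (by omega), ht'eq (i+1) (by omega)]; exact hs i h
      · have him : i = m := by omega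
        rw [him, ht'eq m le_rfl, hlast]
        exact hlt
    calc (∑ i ∈ Finset.range m, X (t i) (t (i + 1)))
        = ∑ i ∈ Finset.range m, X (t' i) (t' (i + 1)) := by
          refine Finset.sum_congr rfl fun i hi => ?_
          rw [Finset.mem_range] at hi
          rw [ht'eq i (by omega), ht'eq (i+1) (by omega)]
      _ ≤ ∑ i ∈ Finset.range (m + 1), X (t' i) (t' (i + 1)) :=
          Finset.sum_le_sum_of_subset (Finset.range_subset_range.2 (by omega))
      _ ≤ Mb := key

/-- General: strict partitions inside `[a,b]` have sum bounded. -/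
lemma chain_sum_le (X : ℝ → ℝ → ENNReal) (a b : ℝ) (Mb : ENNReal)
    (hM : ∀ (m : ℕ) (t : ℕ → ℝ), t 0 = a → t m = b → (∀ i, i < m → t i < t (i + 1)) →
      (∑ i ∈ Finset.range m, X (t i) (t (i + 1))) ≤ Mb)
    (m : ℕ) (t : ℕ → ℝ) (h0 : a ≤ t 0) (hm : t m ≤ b)
    (hs : ∀ i, i < m → t i < t (i + 1)) :
    (∑ i ∈ Finset.range m, X (t i) (t (i + 1))) ≤ Mb := by
  rcases eq_or_lt_of_le h0 with he | hlt
  · exact chain_sum_le_append X a b Mb hM m t he.symm hm hs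
  · set t' : ℕ → ℝ := fun j => if j = 0 then a else t (j - 1) with ht'
    have ht'eq : ∀ j, t' (j + 1) = t j := fun j => by simp [ht']
    have key : (∑ i ∈ Finset.range (m + 1), X (t' i) (t' (i + 1))) ≤ Mb := by
      refine chain_sum_le_append X a b Mb hM (m + 1) t' rfl (by rw [ht'eq]; exact hm) ?_
      intro i hi
      cases i with
      | zero => rw [ht'eq 0]; exact hlt
      | succ j => rw [ht'eq j, ht'eq (j + 1)]; exact hs j (by omega)
    calc (∑ i ∈ Finset.range m, X (t i) (t (i + 1)))
        = ∑ i ∈ Finset.range m, X (t' (i + 1)) (t' (i + 1 + 1)) := by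
          refine Finset.sum_congr rfl fun i _ => by rw [ht'eq, ht'eq]
      _ ≤ ∑ i ∈ Finset.range (m + 1), X (t' i) (t' (i + 1)) := by
          rw [Finset.sum_range_succ' (fun i => X (t' i) (t' (i + 1))) m]
          exact le_self_add
      _ ≤ Mb := key

/-- Strictification: monotone chains are bounded by the strict bound. -/
lemma mono_chain_sum_le (X : ℝ → ℝ → ENNReal) (hdiag : ∀ s, X s s = 0)
    (a b : ℝ) (Mb : ENNReal)
    (hB : ∀ (m : ℕ) (t : ℕ → ℝ), a ≤ t 0 → t m ≤ b → (∀ i, i < m → t i < t (i + 1)) →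
      (∑ i ∈ Finset.range m, X (t i) (t (i + 1))) ≤ Mb)
    (u : ℕ → ℝ) (hu : Monotone u) (hmem : ∀ i, u i ∈ Icc a b) (n : ℕ) :
    (∑ i ∈ Finset.range n, X (u i) (u (i + 1))) ≤ Mb := by
  have main : ∀ n : ℕ, ∃ (m : ℕ) (t : ℕ → ℝ), t 0 = u 0 ∧ t m = u n ∧
      (∀ i, i < m → t i < t (i + 1)) ∧
      (∑ i ∈ Finset.range n, X (u i) (u (i + 1))) ≤
        ∑ j ∈ Finset.range m, X (t j) (t (j + 1)) := by
    intro n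
    induction n with
    | zero => exact ⟨0, fun _ => u 0, rfl, rfl, fun i hi => absurd hi (by omega), by simp⟩
    | succ n ih =>
      obtain ⟨m, t, ht0, htm, hts, hle⟩ := ih
      rcases eq_or_lt_of_le (hu (Nat.le_succ n)) with he | hlt
      · refine ⟨m, t, ht0, by rw [htm, he], hts, ?_⟩
        rw [Finset.sum_range_succ, ← he, hdiag, add_zero]
        exact hle
      · set t' : ℕ → ℝ := fun j => if j ≤ m then t j else u (n + 1) with ht'
        have ht'eq : ∀ j, j ≤ m → t' j = t j := fun j hj => by simp [ht', hj]
        have hlast : t' (m + 1) = u (n + 1) := by simp [ht', Nat.not_succ_le_self]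
        refine ⟨m + 1, t', by rw [ht'eq 0 (Nat.zero_le m)]; exact ht0, hlast, ?_, ?_⟩
        · intro i hi
          rcases Nat.lt_or_ge i m with h | h
          · rw [ht'eq i (by omega), ht'eq (i+1) (by omega)]; exact hts i h
          · have him : i = m := by omega
            rw [him, ht'eq m le_rfl, hlast, htm]
            exact hlt
        · have h1 : t' m = t m := ht'eq m le_rfl
          rw [Finset.sum_range_succ, Finset.sum_range_succ, h1, hlast, htm]
          refine add_le_add ?_ le_rfl
          refine hle.trans (le_of_eq (Finset.sum_congr rfl fun i hi => ?_))
          rw [Finset.mem_range] at hi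
          rw [ht'eq i (by omega), ht'eq (i+1) (by omega)]
  obtain ⟨m, t, ht0, htm, hts, hle⟩ := main n
  exact hle.trans (hB m t (ht0 ▸ (hmem 0).1) (htm ▸ (hmem n).2) hts)

/-- Lemma 4.2: if `E` is a continuous LBV tube and `Y` has nonempty compact values, is
measurable, and is absolutely continuous in Hausdorff distance, then
`Ψ(t) = dist(E(t), Y(t))` is continuous and of locally bounded variation on `[0,∞)`. -/
theorem stmt8 {d : ℕ} (E Y : ℝ → Set (EuclideanSpace ℝ (Fin d)))
    (hEval : ∀ t ∈ Ici (0 : ℝ), (E t).Nonempty ∧ IsClosed (E t))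
    (hEcont : PKContinuousOn E (Ici 0))
    (hELBV : IsLBV E (Ici 0))
    (hYval : ∀ t ∈ Ici (0 : ℝ), (Y t).Nonempty ∧ IsCompact (Y t))
    (hYmeas : ∀ x : EuclideanSpace ℝ (Fin d), Measurable (fun t => EMetric.infEdist x (Y t)))
    (ρ : ℝ → ℝ) (hρ0 : ∀ t, 0 ≤ ρ t) (hρ : LocallyIntegrableOn ρ (Ici 0))
    (hH : ∀ s t : ℝ, 0 ≤ s → s ≤ t →
      EMetric.hausdorffEdist (Y t) (Y s) ≤ ENNReal.ofReal (∫ h in s..t, ρ h)) :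
    ContinuousOn (fun t => sdist (E t) (Y t)) (Ici 0) ∧
      LocallyBoundedVariationOn (fun t => sdist (E t) (Y t)) (Ici 0) := by
  set Ψ : ℝ → ℝ := fun t => sdist (E t) (Y t) with hΨdef
  set F : ℝ → ℝ := fun x => ∫ h in (0:ℝ)..x, ρ h with hFdef
  -- integrability facts
  have hvol : ∀ t : ℝ, 0 ≤ t → IntegrableOn ρ (Icc 0 t) :=
    fun t _ => hρ.integrableOn_compact_subset (fun x hx => hx.1) isCompact_Icc
  have hII : ∀ t : ℝ, 0 ≤ t → IntervalIntegrable ρ volume 0 t := fun t ht => by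
    have := hvol t ht
    rw [← uIcc_of_le ht] at this
    exact this.intervalIntegrable
  have hFsub : ∀ s t : ℝ, 0 ≤ s → s ≤ t → (∫ h in s..t, ρ h) = F t - F s :=
    fun s t hs hst =>
      (intervalIntegral.integral_interval_sub_left (hII t (hs.trans hst)) (hII s hs)).symm
  have hFmono : ∀ s t : ℝ, 0 ≤ s → s ≤ t → F s ≤ F t := by
    intro s t hs hst
    have h0 : 0 ≤ ∫ h in s..t, ρ h := intervalIntegral.integral_nonneg hst fun x _ => hρ0 x
    rw [hFsub s t hs hst] at h0
    linarith
  have hHF : ∀ s t : ℝ, 0 ≤ s → s ≤ t →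
      EMetric.hausdorffEdist (Y t) (Y s) ≤ ENNReal.ofReal (F t - F s) := fun s t hs hst => by
    rw [← hFsub s t hs hst]; exact hH s t hs hst
  -- continuity of the primitive within `Ici 0`
  have hFcont : ∀ t₀ ∈ Ici (0:ℝ), ContinuousWithinAt F (Ici 0) t₀ := by
    intro t₀ ht₀
    have hint : IntegrableOn ρ (uIcc 0 (t₀ + 1)) := by
      rw [uIcc_of_le (by linarith [mem_Ici.1 ht₀])]
      exact hvol (t₀ + 1) (by linarith [mem_Ici.1 ht₀])
    have hcont := intervalIntegral.continuousOn_primitive_interval hint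
    have h1 : ContinuousWithinAt F (uIcc 0 (t₀ + 1)) t₀ := by
      refine hcont t₀ ?_
      rw [uIcc_of_le (by linarith [mem_Ici.1 ht₀])]
      exact ⟨mem_Ici.1 ht₀, by linarith⟩
    have h2 : ContinuousWithinAt F (Ici 0 ∩ Iio (t₀ + 1)) t₀ := by
      refine h1.mono ?_
      rw [uIcc_of_le (by linarith [mem_Ici.1 ht₀])]
      exact fun x hx => ⟨hx.1, le_of_lt hx.2⟩
    exact (continuousWithinAt_inter' (nhdsWithin_le_nhds (Iio_mem_nhds (lt_add_one t₀)))).1 h2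
  -- Hausdorff distance to `Y t₀` tends to zero
  have hdH0 : ∀ t₀ ∈ Ici (0:ℝ),
      Tendsto (fun s => EMetric.hausdorffEdist (Y s) (Y t₀)) (𝓝[Ici 0] t₀) (𝓝 0) := by
    intro t₀ ht₀
    rw [ENNReal.tendsto_nhds_zero]
    intro ε hε
    rcases eq_or_ne ε ⊤ with rfl | htop
    · exact Eventually.of_forall fun _ => le_top
    have hc : 0 < ε.toReal := ENNReal.toReal_pos hε.ne' htop
    have hev := Metric.tendsto_nhds.1 (hFcont t₀ ht₀) _ hc
    filter_upwards [hev, eventually_mem_nhdsWithin] with s hs hs0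
    have hd : |F s - F t₀| < ε.toReal := by rwa [Real.dist_eq] at hs
    rcases le_total s t₀ with h | h
    · rw [show EMetric.hausdorffEdist (Y s) (Y t₀) = EMetric.hausdorffEdist (Y t₀) (Y s) from EMetric.hausdorffEdist_comm]
      refine (hHF s t₀ (mem_Ici.1 hs0) h).trans ?_
      rw [← ENNReal.ofReal_toReal htop]
      exact ENNReal.ofReal_le_ofReal (by cases abs_cases (F s - F t₀) <;> linarith)
    · refine (hHF t₀ s (mem_Ici.1 ht₀) h).trans ?_
      rw [← ENNReal.ofReal_toReal htop]
      exact ENNReal.ofReal_le_ofReal (by cases abs_cases (F s - F t₀) <;> linarith)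
  -- upper semicontinuity
  have hUSC : ∀ t₀ ∈ Ici (0:ℝ), ∀ ε : ℝ, 0 < ε →
      ∀ᶠ s in 𝓝[Ici 0] t₀, Ψ s < Ψ t₀ + ε := by
    intro t₀ ht₀ ε hε
    obtain ⟨hEne, _⟩ := hEval t₀ ht₀
    obtain ⟨hYne, _⟩ := hYval t₀ ht₀
    obtain ⟨e₀, he₀, y₀, hy₀, hd₀⟩ := sdist_exists_lt hEne hYne (by positivity : (0:ℝ) < ε/3)
    have hlimsup : limsup (fun s => EMetric.infEdist e₀ (E s)) (𝓝[Ici 0] t₀) = 0 :=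
      (hEcont t₀ ht₀).2 he₀
    have hEev : ∀ᶠ s in 𝓝[Ici 0] t₀, EMetric.infEdist e₀ (E s) < ENNReal.ofReal (ε/3) := by
      refine eventually_lt_of_limsup_lt ?_
      rw [hlimsup]
      exact ENNReal.ofReal_pos.2 (by positivity)
    have hYev : ∀ᶠ s in 𝓝[Ici 0] t₀,
        EMetric.infEdist y₀ (Y s) < ENNReal.ofReal (ε/3) :=
      ((hdH0 t₀ ht₀).eventually (gt_mem_nhds (ENNReal.ofReal_pos.2 (by positivity)))).mono
        fun s hs => lt_of_le_of_lt
          ((EMetric.infEdist_le_hausdorffEdist_of_mem hy₀).trans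
            (le_of_eq (EMetric.hausdorffEdist_comm))) hs
    filter_upwards [hEev, hYev] with s hsE hsY
    obtain ⟨e, he, hee⟩ := EMetric.infEdist_lt_iff.1 hsE
    obtain ⟨y, hy, hyy⟩ := EMetric.infEdist_lt_iff.1 hsY
    rw [edist_lt_ofReal] at hee hyy
    calc Ψ s ≤ dist e y := sdist_le he hy
      _ ≤ dist e e₀ + dist e₀ y₀ + dist y₀ y := dist_triangle4 e e₀ y₀ y
      _ < ε/3 + (Ψ t₀ + ε/3) + ε/3 := by
          rw [dist_comm e e₀]
          exact add_lt_add (add_lt_add hee hd₀) hyy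
      _ = Ψ t₀ + ε := by ring
  -- lower semicontinuity
  have hLSC : ∀ t₀ ∈ Ici (0:ℝ), ∀ ε : ℝ, 0 < ε →
      ∀ᶠ s in 𝓝[Ici 0] t₀, Ψ t₀ - ε < Ψ s := by
    intro t₀ ht₀ ε hε
    by_contra hcon
    rw [Filter.not_eventually] at hcon
    have hfreq : ∃ᶠ s in 𝓝[Ici 0] t₀, s ∈ Ici (0:ℝ) ∧ Ψ s ≤ Ψ t₀ - ε :=
      hcon.mp (eventually_mem_nhdsWithin.mono fun s hs h => ⟨hs, not_lt.1 h⟩)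
    obtain ⟨x, hxt, hxp⟩ := exists_seq_forall_of_frequently hfreq
    have hchoice : ∀ n : ℕ, ∃ e ∈ E (x n), ∃ y ∈ Y (x n),
        dist e y < Ψ (x n) + 1/(n+1 : ℝ) := fun n =>
      sdist_exists_lt (hEval _ (hxp n).1).1 (hYval _ (hxp n).1).1 (by positivity)
    choose e he y hy hd using hchoice
    -- bounds
    obtain ⟨R0, hR0⟩ := (hYval t₀ ht₀).2.isBounded.subset_closedBall 0
    set Ry : ℝ := max R0 0 + 1 with hRydef
    set R : ℝ := Ry + |Ψ t₀| + 1 with hRdef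
    have hR0R : R0 ≤ max R0 0 := le_max_left _ _
    have hRyR : Ry ≤ R := by rw [hRdef]; have := abs_nonneg (Ψ t₀); linarith
    have hevK : ∀ᶠ n in atTop, (e n, y n) ∈
        (closedBall (0 : EuclideanSpace ℝ (Fin d)) R) ×ˢ (closedBall 0 R) := by
      have h1 : ∀ᶠ n in atTop,
          EMetric.hausdorffEdist (Y (x n)) (Y t₀) < ENNReal.ofReal 1 :=
        hxt.eventually ((hdH0 t₀ ht₀).eventually (gt_mem_nhds (by norm_num)))
      filter_upwards [h1] with n hn
      have hinf : EMetric.infEdist (y n) (Y t₀) < ENNReal.ofReal 1 :=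
        lt_of_le_of_lt (EMetric.infEdist_le_hausdorffEdist_of_mem (hy n)) hn
      obtain ⟨y', hy', hyy'⟩ := EMetric.infEdist_lt_iff.1 hinf
      rw [edist_lt_ofReal] at hyy'
      have hy'0 : dist y' 0 ≤ R0 := mem_closedBall.1 (hR0 hy')
      have hyn : dist (y n) 0 ≤ Ry := by
        calc dist (y n) 0 ≤ dist (y n) y' + dist y' 0 := dist_triangle _ _ _
          _ ≤ 1 + R0 := by linarith
          _ ≤ Ry := by rw [hRydef]; linarith
      have hen : dist (e n) 0 ≤ R := by
        have h1n : (1:ℝ)/(n+1) ≤ 1 := by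
          rw [div_le_one (by positivity)]
          linarith [Nat.cast_nonneg (α := ℝ) n]
        have hΨn : Ψ (x n) ≤ Ψ t₀ - ε := (hxp n).2
        have habs : Ψ t₀ ≤ |Ψ t₀| := le_abs_self _
        calc dist (e n) 0 ≤ dist (e n) (y n) + dist (y n) 0 := dist_triangle _ _ _
          _ ≤ (Ψ (x n) + 1/(n+1:ℝ)) + Ry := by linarith [le_of_lt (hd n)]
          _ ≤ R := by rw [hRdef]; linarith
      exact ⟨mem_closedBall.2 hen, mem_closedBall.2 (hyn.trans hRyR)⟩
    have hcp : IsCompact ((closedBall (0 : EuclideanSpace ℝ (Fin d)) R) ×ˢ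
        (closedBall (0 : EuclideanSpace ℝ (Fin d)) R)) :=
      (isCompact_closedBall _ _).prod (isCompact_closedBall _ _)
    obtain ⟨p, _, φ, hφ, hconv⟩ := hcp.tendsto_subseq' hevK.frequently
    rw [nhds_prod_eq] at hconv
    obtain ⟨hconv1, hconv2⟩ := tendsto_prod_iff'.1 hconv
    simp only [Function.comp] at hconv1 hconv2
    have hxφ : Tendsto (x ∘ φ) atTop (𝓝[Ici 0] t₀) := hxt.comp hφ.tendsto_atTop
    -- the limit point of the `y`-sequence belongs to `Y t₀`
    have hH2 : Tendsto (fun k => EMetric.hausdorffEdist (Y (x (φ k))) (Y t₀)) atTop (𝓝 0) :=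
      (hdH0 t₀ ht₀).comp hxφ
    have hyinf : Tendsto (fun k => EMetric.infEdist (y (φ k)) (Y t₀)) atTop (𝓝 0) :=
      tendsto_of_tendsto_of_tendsto_of_le_of_le tendsto_const_nhds hH2
        (fun k => zero_le)
        (fun k => EMetric.infEdist_le_hausdorffEdist_of_mem (hy (φ k)))
    have hyinf' : Tendsto (fun k => EMetric.infEdist (y (φ k)) (Y t₀)) atTop
        (𝓝 (EMetric.infEdist p.2 (Y t₀))) :=
      (EMetric.continuous_infEdist.tendsto p.2).comp hconv2
    have hyMem : p.2 ∈ Y t₀ :=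
      (EMetric.mem_iff_infEdist_zero_of_closed (hYval t₀ ht₀).2.isClosed).2
        (tendsto_nhds_unique hyinf' hyinf)
    -- the limit point of the `e`-sequence belongs to `E t₀`
    have hedist : Tendsto (fun k => edist p.1 (e (φ k))) atTop (𝓝 0) := by
      have := (tendsto_const_nhds (x := p.1) (f := atTop (α := ℕ))).edist hconv1
      rwa [edist_self] at this
    have hEseq : Tendsto (fun k => EMetric.infEdist p.1 (E (x (φ k)))) atTop (𝓝 0) := by
      refine tendsto_of_tendsto_of_tendsto_of_le_of_le tendsto_const_nhds hedist
        (fun k => zero_le) (fun k => ?_)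
      calc EMetric.infEdist p.1 (E (x (φ k)))
          ≤ EMetric.infEdist (e (φ k)) (E (x (φ k))) + edist p.1 (e (φ k)) :=
            EMetric.infEdist_le_infEdist_add_edist
        _ = edist p.1 (e (φ k)) := by
            rw [show EMetric.infEdist (e (φ k)) (E (x (φ k))) = 0 from EMetric.infEdist_zero_of_mem (he (φ k)), zero_add]
    have heMem : p.1 ∈ E t₀ := by
      refine (hEcont t₀ ht₀).1 ?_
      have hmap : Tendsto (fun s => EMetric.infEdist p.1 (E s)) (map (x ∘ φ) atTop) (𝓝 0) :=
        tendsto_map'_iff.2 hEseq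
      have h1 : liminf (fun s => EMetric.infEdist p.1 (E s)) (𝓝[Ici 0] t₀) ≤
          liminf (fun s => EMetric.infEdist p.1 (E s)) (map (x ∘ φ) atTop) :=
        liminf_le_liminf_of_le hxφ
      rw [hmap.liminf_eq] at h1
      exact le_antisymm h1 zero_le
    -- contradiction
    have hPsile : Ψ t₀ ≤ dist p.1 p.2 := sdist_le heMem hyMem
    have hdlim : Tendsto (fun k => dist (e (φ k)) (y (φ k))) atTop (𝓝 (dist p.1 p.2)) :=
      hconv1.dist hconv2
    have hquot : Tendsto (fun k => 1/((φ k : ℝ)+1)) atTop (𝓝 0) :=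
      tendsto_one_div_add_atTop_nhds_zero_nat.comp hφ.tendsto_atTop
    have hfin : dist p.1 p.2 - 0 ≤ Ψ t₀ - ε := by
      refine le_of_tendsto (hdlim.sub hquot) (Eventually.of_forall fun k => ?_)
      have h1 := hd (φ k)
      have h2 := (hxp (φ k)).2
      linarith
    linarith
  -- continuity
  have hcont : ContinuousOn Ψ (Ici 0) := by
    intro t₀ ht₀
    have : Tendsto Ψ (𝓝[Ici 0] t₀) (𝓝 (Ψ t₀)) := by
      rw [Metric.tendsto_nhds]
      intro ε hε
      filter_upwards [hUSC t₀ ht₀ ε hε, hLSC t₀ ht₀ ε hε] with s h1 h2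
      rw [Real.dist_eq, abs_sub_lt_iff]
      constructor <;> linarith
    exact this
  refine ⟨hcont, ?_⟩
  -- locally bounded variation
  intro a b ha hb
  rcases le_total a b with hab | hab
  swap
  · rcases eq_or_lt_of_le hab with rfl | hlt
    · rw [BoundedVariationOn,
        eVariationOn.subsingleton _ (fun u hu v hv => by
          have h1 : u = b := le_antisymm hu.2.2 hu.2.1
          have h2 : v = b := le_antisymm hv.2.2 hv.2.1
          rw [h1, h2])]
      exact ENNReal.zero_ne_top
    · rw [BoundedVariationOn, Icc_eq_empty (not_le.2 hlt), inter_empty,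
        eVariationOn.subsingleton _ subsingleton_empty]
      exact ENNReal.zero_ne_top
  have ha0 : (0:ℝ) ≤ a := mem_Ici.1 ha
  have hb0 : (0:ℝ) ≤ b := mem_Ici.1 hb
  have hset : Ici (0:ℝ) ∩ Icc a b = Icc a b :=
    inter_eq_self_of_subset_right (fun x hx => le_trans ha0 hx.1)
  -- a uniform bound for Ψ on [a,b]
  obtain ⟨C, hC⟩ := isCompact_Icc.exists_bound_of_continuousOn
    (hcont.mono (fun x hx => le_trans ha0 hx.1) : ContinuousOn Ψ (Icc a b))
  have hΨC : ∀ t ∈ Icc a b, Ψ t ≤ C := fun t ht =>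
    (le_abs_self _).trans ((Real.norm_eq_abs _ ▸ hC t ht : |Ψ t| ≤ C))
  -- a uniform bound for Y on [a,b]
  obtain ⟨R0, hR0⟩ := (hYval a ha).2.isBounded.subset_closedBall 0
  set RY : ℝ := max R0 0 + max (F b - F a) 0 + 1 with hRYdef
  have hYbnd : ∀ t ∈ Icc a b, ∀ z ∈ Y t, dist z 0 ≤ RY := by
    intro t ht z hz
    have h1 : EMetric.infEdist z (Y a) ≤ ENNReal.ofReal (F b - F a) := by
      refine (EMetric.infEdist_le_hausdorffEdist_of_mem hz).trans ?_
      refine (hHF a t ha0 ht.1).trans (ENNReal.ofReal_le_ofReal ?_)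
      have := hFmono t b (le_trans ha0 ht.1) ht.2
      linarith
    have hfin : EMetric.infEdist z (Y a) ≠ ⊤ :=
      fun h => by simp [h] at h1
    obtain ⟨z', hz', hzz'⟩ := exists_dist_lt_of_infEdist_ne_top hfin one_pos
    have h2 : (EMetric.infEdist z (Y a)).toReal ≤ max (F b - F a) 0 :=
      ENNReal.toReal_le_of_le_ofReal (le_max_right _ _)
        (h1.trans (ENNReal.ofReal_le_ofReal (le_max_left _ _)))
    have h3 : dist z' 0 ≤ R0 := mem_closedBall.1 (hR0 hz')
    calc dist z 0 ≤ dist z z' + dist z' 0 := dist_triangle _ _ _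
      _ ≤ RY := by
          rw [hRYdef]
          have := le_max_left R0 0
          linarith
  -- the compact set capturing near-minimizers
  set K : Set (EuclideanSpace ℝ (Fin d)) := closedBall 0 (RY + max C 0 + 1) with hKdef
  have hKcp : IsCompact K := isCompact_closedBall _ _
  have hKsel : ∀ t ∈ Icc a b, ∀ δ : ℝ, 0 < δ →
      ∃ p ∈ E t ∩ K, ∃ q ∈ Y t, dist p q < sdist (E t) (Y t) + δ := by
    intro t ht δ hδ
    have ht0 : t ∈ Ici (0:ℝ) := le_trans ha0 ht.1
    obtain ⟨p, hp, q, hq, hpq⟩ := sdist_exists_lt (hEval t ht0).1 (hYval t ht0).1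
      (lt_min hδ one_pos)
    refine ⟨p, ⟨hp, ?_⟩, q, hq, hpq.trans_le (by simp [min_le_left])⟩
    have h1 : dist q 0 ≤ RY := hYbnd t ht q hq
    have h2 : sdist (E t) (Y t) ≤ C := hΨC t ht
    have h3 : min δ 1 ≤ 1 := min_le_right _ _
    have h4 : C ≤ max C 0 := le_max_left _ _
    rw [hKdef, mem_closedBall]
    calc dist p 0 ≤ dist p q + dist q 0 := dist_triangle _ _ _
      _ ≤ RY + max C 0 + 1 := by linarith
  -- the LBV bound for E
  obtain ⟨M, hM⟩ := hELBV a b (mem_Ici.2 ha0) (mem_Ici.2 hb0) hab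
  set Xf : ℝ → ℝ → ENNReal := fun s t =>
    max (eexc (E t ∩ K) (E s)) (eexc (E s ∩ K) (E t)) with hXfdef
  have hdiag : ∀ s, Xf s s = 0 := fun s => by
    rw [hXfdef]; simp [eexc_self]
  have hB : ∀ (m : ℕ) (t : ℕ → ℝ), a ≤ t 0 → t m ≤ b →
      (∀ i, i < m → t i < t (i + 1)) →
      (∑ i ∈ Finset.range m, Xf (t i) (t (i + 1))) ≤ ENNReal.ofReal M :=
    chain_sum_le Xf a b (ENNReal.ofReal M) (fun m t h0 hm hs => hM K hKcp m t h0 hm hs)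
  -- the pairwise estimate
  have hpair : ∀ s t : ℝ, s ∈ Icc a b → t ∈ Icc a b → s ≤ t →
      edist (Ψ t) (Ψ s) ≤ Xf s t + ENNReal.ofReal (F t - F s) := by
    intro s t hsm htm hst
    rcases eq_or_lt_of_le hst with rfl | hlt
    · simp
    have hs0 : (0:ℝ) ≤ s := le_trans ha0 hsm.1
    have hXle : Xf s t ≤ ENNReal.ofReal M := by
      have := hB 1 (fun j => if j = 0 then s else t) (by simpa using hsm.1)
        (by simp [htm.2]) (fun i hi => by
          interval_cases i
          simpa using hlt)
      simpa using this
    have hXfin : Xf s t ≠ ⊤ := fun h => by simp [h] at hXle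
    have hexc1 : eexc (E t ∩ K) (E s) ≠ ⊤ :=
      fun h => hXfin (top_le_iff.1 (h ▸ le_max_left _ (eexc (E s ∩ K) (E t))))
    have hexc2 : eexc (E s ∩ K) (E t) ≠ ⊤ :=
      fun h => hXfin (top_le_iff.1 (h ▸ le_max_right (eexc (E t ∩ K) (E s)) _))
    have hdHle : EMetric.hausdorffEdist (Y t) (Y s) ≤ ENNReal.ofReal (F t - F s) :=
      hHF s t hs0 hst
    have hdHfin : EMetric.hausdorffEdist (Y t) (Y s) ≠ ⊤ :=
      fun h => by simp [h] at hdHle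
    have hineq1 : Ψ s ≤ Ψ t + (eexc (E t ∩ K) (E s)).toReal +
        (EMetric.hausdorffEdist (Y t) (Y s)).toReal :=
      sdist_le_sdist_add hexc1 hdHfin (hKsel t htm)
    have hdHfin' : EMetric.hausdorffEdist (Y s) (Y t) ≠ ⊤ := by
      rw [show EMetric.hausdorffEdist (Y s) (Y t) = EMetric.hausdorffEdist (Y t) (Y s) from EMetric.hausdorffEdist_comm]; exact hdHfin
    have hineq2 : Ψ t ≤ Ψ s + (eexc (E s ∩ K) (E t)).toReal +
        (EMetric.hausdorffEdist (Y s) (Y t)).toReal :=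
      sdist_le_sdist_add hexc2 hdHfin' (hKsel s hsm)
    rw [show EMetric.hausdorffEdist (Y s) (Y t) = EMetric.hausdorffEdist (Y t) (Y s) from EMetric.hausdorffEdist_comm] at hineq2
    have hmax1 : (eexc (E t ∩ K) (E s)).toReal ≤ (Xf s t).toReal :=
      ENNReal.toReal_mono hXfin (le_max_left _ _)
    have hmax2 : (eexc (E s ∩ K) (E t)).toReal ≤ (Xf s t).toReal :=
      ENNReal.toReal_mono hXfin (le_max_right _ _)
    have habs : |Ψ t - Ψ s| ≤ (Xf s t).toReal +
        (EMetric.hausdorffEdist (Y t) (Y s)).toReal := by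
      rw [abs_sub_le_iff]
      constructor <;> linarith
    calc edist (Ψ t) (Ψ s) = ENNReal.ofReal |Ψ t - Ψ s| := by
          rw [edist_dist, Real.dist_eq]
      _ ≤ ENNReal.ofReal ((Xf s t).toReal +
            (EMetric.hausdorffEdist (Y t) (Y s)).toReal) := ENNReal.ofReal_le_ofReal habs
      _ = ENNReal.ofReal (Xf s t).toReal +
            ENNReal.ofReal (EMetric.hausdorffEdist (Y t) (Y s)).toReal :=
          ENNReal.ofReal_add ENNReal.toReal_nonneg ENNReal.toReal_nonneg
      _ = Xf s t + EMetric.hausdorffEdist (Y t) (Y s) := by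
          rw [ENNReal.ofReal_toReal hXfin, ENNReal.ofReal_toReal hdHfin]
      _ ≤ Xf s t + ENNReal.ofReal (F t - F s) := add_le_add le_rfl hdHle
  -- conclude
  rw [BoundedVariationOn, hset]
  refine ne_top_of_le_ne_top (a := eVariationOn Ψ (Icc a b))
    (show ENNReal.ofReal M + ENNReal.ofReal (F b - F a) ≠ ⊤ by
      exact ENNReal.add_ne_top.2 ⟨ENNReal.ofReal_ne_top, ENNReal.ofReal_ne_top⟩) ?_
  rw [eVariationOn]
  refine iSup_le ?_
  rintro ⟨n, ⟨u, hu, hus⟩⟩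
  have humem : ∀ i, u i ∈ Icc a b := hus
  calc (∑ i ∈ Finset.range n, edist (Ψ (u (i + 1))) (Ψ (u i)))
      ≤ ∑ i ∈ Finset.range n, (Xf (u i) (u (i + 1)) +
          ENNReal.ofReal (F (u (i + 1)) - F (u i))) := by
        refine Finset.sum_le_sum fun i _ => ?_
        exact hpair (u i) (u (i + 1)) (humem i) (humem (i+1)) (hu (Nat.le_succ i))
    _ = (∑ i ∈ Finset.range n, Xf (u i) (u (i + 1))) +
          ∑ i ∈ Finset.range n, ENNReal.ofReal (F (u (i + 1)) - F (u i)) :=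
        Finset.sum_add_distrib
    _ ≤ ENNReal.ofReal M + ENNReal.ofReal (F b - F a) := by
        refine add_le_add (mono_chain_sum_le Xf hdiag a b _ hB u hu humem n) ?_
        have hnn : ∀ i ∈ Finset.range n, 0 ≤ F (u (i + 1)) - F (u i) := fun i _ => by
          have := hFmono (u i) (u (i + 1)) (le_trans ha0 (humem i).1) (hu (Nat.le_succ i))
          linarith
        rw [← ENNReal.ofReal_sum_of_nonneg hnn]
        refine ENNReal.ofReal_le_ofReal ?_
        rw [Finset.sum_range_sub (fun i => F (u i)) n]
        have h1 : F (u n) ≤ F b := hFmono (u n) b (le_trans ha0 (humem n).1) (humem n).2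
        have h2 : F a ≤ F (u 0) := hFmono a (u 0) ha0 (humem 0).1
        linarith
end
end

section
/- Let E ⊆ ℝᵏ be a closed set and x ∈ E. Then the Clarke tangent cone satisfies T^C_E(x) = (N_E(x))⁻ ⊆ T_E(x), where N_E(x) is the limiting normal cone and T_E(x) the Bouligand tangent cone; moreover (T^C_E(x))⁻ = cl co N_E(x). -/
open Filter Metric Set Topology Pointwise

noncomputable section

/-- Bouligand (contingent) tangent cone: `T_E(x) = Limsup_{t→0⁺} (E − x)/t`. -/
def bouligand {k : ℕ} (E : Set (EuclideanSpace ℝ (Fin k))) (x : EuclideanSpace ℝ (Fin k)) :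
    Set (EuclideanSpace ℝ (Fin k)) :=
  setLimsup (𝓝[>] (0 : ℝ)) (fun t => (fun e => t⁻¹ • (e - x)) '' E)

/-- Clarke tangent cone: `T^C_E(x) = Liminf_{t→0⁺, y→x in E} (E − y)/t`. -/
def clarkeTangent {k : ℕ} (E : Set (EuclideanSpace ℝ (Fin k))) (x : EuclideanSpace ℝ (Fin k)) :
    Set (EuclideanSpace ℝ (Fin k)) :=
  setLiminf ((𝓝[>] (0 : ℝ)) ×ˢ (𝓝[E] x)) (fun p => (fun e => p.1⁻¹ • (e - p.2)) '' E)

/-- Negative polar of a set: `S⁻ = {p : ⟨p,s⟩ ≤ 0 for all s ∈ S}`. -/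
def npolar {k : ℕ} (S : Set (EuclideanSpace ℝ (Fin k))) : Set (EuclideanSpace ℝ (Fin k)) :=
  {p | ∀ s ∈ S, (inner ℝ p s : ℝ) ≤ 0}

/-- Limiting normal cone: `N_E(x) = Limsup_{y→x in E} (T_E(y))⁻`. -/
def limitingNormal {k : ℕ} (E : Set (EuclideanSpace ℝ (Fin k))) (x : EuclideanSpace ℝ (Fin k)) :
    Set (EuclideanSpace ℝ (Fin k)) :=
  setLimsup (𝓝[E] x) (fun y => npolar (bouligand E y))

/-! ### Auxiliary lemmas -/

lemma ennreal_eq_zero_of_forall {x : ENNReal}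
    (h : ∀ ε : ℝ, 0 < ε → x ≤ ENNReal.ofReal ε) : x = 0 := by
  refine le_antisymm ?_ zero_le
  have h2 : Tendsto (fun n : ℕ => ENNReal.ofReal ((n + 1 : ℝ)⁻¹)) atTop (𝓝 0) := by
    rw [← ENNReal.ofReal_zero]
    exact ENNReal.tendsto_ofReal
      (tendsto_one_div_add_atTop_nhds_zero_nat.congr (by simp [one_div]))
  exact ge_of_tendsto h2 (Eventually.of_forall fun n => h _ (by positivity))

lemma liminf_eq_zero_iff {α : Type*} {l : Filter α} {f : α → ENNReal} :
    liminf f l = 0 ↔ ∀ ε : ℝ, 0 < ε → ∃ᶠ a in l, f a < ENNReal.ofReal ε := by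
  constructor
  · intro h ε hε
    exact Filter.frequently_lt_of_liminf_lt (by isBoundedDefault)
      (h ▸ (by simpa using hε : (0:ENNReal) < ENNReal.ofReal ε))
  · intro h
    exact ennreal_eq_zero_of_forall fun ε hε =>
      Filter.liminf_le_of_frequently_le ((h ε hε).mono fun a ha => ha.le)

lemma limsup_eq_zero_iff {α : Type*} {l : Filter α} {f : α → ENNReal} :
    limsup f l = 0 ↔ ∀ ε : ℝ, 0 < ε → ∀ᶠ a in l, f a < ENNReal.ofReal ε := by
  constructor
  · intro h ε hε
    exact Filter.eventually_lt_of_limsup_lt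
      (h ▸ (by simpa using hε : (0:ENNReal) < ENNReal.ofReal ε))
  · intro h
    exact ennreal_eq_zero_of_forall fun ε hε =>
      Filter.limsup_le_of_le (by isBoundedDefault) ((h ε hε).mono fun a ha => ha.le)

lemma nonpos_of_small {r A δmax : ℝ} (hδ : 0 < δmax) (hA : 0 ≤ A)
    (h : ∀ δ : ℝ, 0 < δ → δ ≤ δmax → r ≤ δ * A) : r ≤ 0 := by
  by_contra hr
  push_neg at hr
  have h1 : 0 < r / (A + 1) := by positivity
  have h2 := h (min δmax (r / (A + 1))) (lt_min hδ h1) (min_le_left _ _)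
  have h3 : min δmax (r / (A + 1)) * A ≤ (r / (A + 1)) * A :=
    mul_le_mul_of_nonneg_right (min_le_right _ _) hA
  have h4 : (r / (A + 1)) * A < r := by
    rw [div_mul_eq_mul_div, div_lt_iff₀ (by linarith)]
    nlinarith
  linarith

lemma mem_setLimsup_iff {α X : Type*} [PseudoMetricSpace X] {l : Filter α} {S : α → Set X}
    {v : X} : v ∈ setLimsup l S ↔ ∀ ε : ℝ, 0 < ε → ∃ᶠ a in l, ∃ z ∈ S a, dist v z < ε := by
  rw [setLimsup, mem_setOf_eq, liminf_eq_zero_iff]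
  refine forall₂_congr fun ε hε => frequently_congr (Eventually.of_forall fun a => ?_)
  rw [EMetric.infEdist, Metric.infEDist_lt_iff]
  exact exists_congr fun z => and_congr_right fun _ => edist_lt_ofReal

lemma mem_setLiminf_iff {α X : Type*} [PseudoMetricSpace X] {l : Filter α} {S : α → Set X}
    {v : X} : v ∈ setLiminf l S ↔ ∀ ε : ℝ, 0 < ε → ∀ᶠ a in l, ∃ z ∈ S a, dist v z < ε := by
  rw [setLiminf, mem_setOf_eq, limsup_eq_zero_iff]
  refine forall₂_congr fun ε hε => eventually_congr (Eventually.of_forall fun a => ?_)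
  rw [EMetric.infEdist, Metric.infEDist_lt_iff]
  exact exists_congr fun z => and_congr_right fun _ => edist_lt_ofReal

lemma not_mem_setLiminf_iff {α X : Type*} [PseudoMetricSpace X] {l : Filter α} {S : α → Set X}
    {v : X} : v ∉ setLiminf l S ↔ ∃ ε : ℝ, 0 < ε ∧ ∃ᶠ a in l, ∀ z ∈ S a, ε ≤ dist v z := by
  rw [mem_setLiminf_iff]
  push_neg
  refine exists_congr fun ε => and_congr_right fun hε => ?_
  rfl

lemma frequently_nhdsWithin_Ioi_iff {p : ℝ → Prop} :
    (∃ᶠ t in 𝓝[>] (0:ℝ), p t) ↔ ∀ η : ℝ, 0 < η → ∃ t, 0 < t ∧ t < η ∧ p t := by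
  rw [(nhdsGT_basis (0:ℝ)).frequently_iff]
  constructor
  · intro h η hη; obtain ⟨t, ht, hp⟩ := h η hη; exact ⟨t, ht.1, ht.2, hp⟩
  · intro h η hη; obtain ⟨t, h1, h2, hp⟩ := h η hη; exact ⟨t, ⟨h1, h2⟩, hp⟩

lemma frequently_nhdsWithin_set_iff {X : Type*} [PseudoMetricSpace X] {E : Set X} {x : X}
    {p : X → Prop} :
    (∃ᶠ y in 𝓝[E] x, p y) ↔ ∀ r : ℝ, 0 < r → ∃ y ∈ E, dist y x < r ∧ p y := by
  rw [nhdsWithin_basis_ball.frequently_iff]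
  constructor
  · intro h r hr; obtain ⟨y, ⟨hb, hE⟩, hp⟩ := h r hr
    exact ⟨y, hE, by rwa [mem_ball] at hb, hp⟩
  · intro h r hr; obtain ⟨y, hE, hb, hp⟩ := h r hr
    exact ⟨y, ⟨by rwa [mem_ball], hE⟩, hp⟩

lemma frequently_prod_iff' {X : Type*} [PseudoMetricSpace X] {E : Set X} {x : X}
    {p : ℝ × X → Prop} :
    (∃ᶠ q in (𝓝[>] (0:ℝ)) ×ˢ (𝓝[E] x), p q) ↔
      ∀ η : ℝ, 0 < η → ∀ r : ℝ, 0 < r →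
        ∃ t, 0 < t ∧ t < η ∧ ∃ y ∈ E, dist y x < r ∧ p (t, y) := by
  rw [((nhdsGT_basis (0:ℝ)).prod nhdsWithin_basis_ball).frequently_iff]
  constructor
  · intro h η hη r hr
    obtain ⟨⟨t, y⟩, ⟨ht, hy⟩, hp⟩ := h (η, r) ⟨hη, hr⟩
    have hb := hy.1
    rw [mem_ball] at hb
    exact ⟨t, ht.1, ht.2, y, hy.2, hb, hp⟩
  · rintro h ⟨η, r⟩ ⟨hη, hr⟩
    obtain ⟨t, h1, h2, y, hE, hb, hp⟩ := h η hη r hr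
    exact ⟨(t, y), ⟨⟨h1, h2⟩, by rwa [mem_ball], hE⟩, hp⟩

lemma eventually_prod_iff' {X : Type*} [PseudoMetricSpace X] {E : Set X} {x : X}
    {p : ℝ × X → Prop} :
    (∀ᶠ q in (𝓝[>] (0:ℝ)) ×ˢ (𝓝[E] x), p q) ↔
      ∃ η : ℝ, 0 < η ∧ ∃ r : ℝ, 0 < r ∧
        ∀ t, 0 < t → t < η → ∀ y ∈ E, dist y x < r → p (t, y) := by
  rw [((nhdsGT_basis (0:ℝ)).prod nhdsWithin_basis_ball).eventually_iff]
  constructor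
  · rintro ⟨⟨η, r⟩, ⟨hη, hr⟩, hp⟩
    exact ⟨η, hη, r, hr, fun t h1 h2 y hE hb => hp ⟨⟨h1, h2⟩, by rwa [mem_ball], hE⟩⟩
  · rintro ⟨η, hη, r, hr, h⟩
    refine ⟨(η, r), ⟨hη, hr⟩, ?_⟩
    rintro ⟨t, y⟩ ⟨ht, hy⟩
    have hb := hy.1
    rw [mem_ball] at hb
    exact h t ht.1 ht.2 y hy.2 hb

/-! ### Euclidean-space specific lemmas -/

variable {k : ℕ}

local notation "H" => EuclideanSpace ℝ (Fin k)

lemma mem_bouligand_iff {E : Set H} {y v : H} :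
    v ∈ bouligand E y ↔ ∀ ε : ℝ, 0 < ε → ∀ η : ℝ, 0 < η →
      ∃ t, 0 < t ∧ t < η ∧ ∃ e ∈ E, dist v (t⁻¹ • (e - y)) < ε := by
  rw [bouligand, mem_setLimsup_iff]
  refine forall₂_congr fun ε hε => ?_
  rw [frequently_nhdsWithin_Ioi_iff]
  refine forall₂_congr fun η hη => exists_congr fun t => and_congr_right fun _ =>
    and_congr_right fun _ => ?_
  simp only [mem_image, exists_exists_and_eq_and]

lemma mem_clarke_iff {E : Set H} {x v : H} :
    v ∈ clarkeTangent E x ↔ ∀ ε : ℝ, 0 < ε →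
      ∃ η : ℝ, 0 < η ∧ ∃ r : ℝ, 0 < r ∧
        ∀ t, 0 < t → t < η → ∀ y ∈ E, dist y x < r →
          ∃ e ∈ E, dist v (t⁻¹ • (e - y)) < ε := by
  rw [clarkeTangent, mem_setLiminf_iff]
  refine forall₂_congr fun ε hε => ?_
  rw [eventually_prod_iff']
  refine exists_congr fun η => and_congr_right fun _ => exists_congr fun r =>
    and_congr_right fun _ => forall_congr' fun t => forall_congr' fun _ =>
      forall_congr' fun _ => forall_congr' fun y => forall_congr' fun _ =>
        forall_congr' fun _ => ?_
  simp only [mem_image, exists_exists_and_eq_and]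

lemma mem_limitingNormal_iff {E : Set H} {x p : H} :
    p ∈ limitingNormal E x ↔ ∀ ε : ℝ, 0 < ε → ∀ r : ℝ, 0 < r →
      ∃ y ∈ E, dist y x < r ∧ ∃ q ∈ npolar (bouligand E y), dist p q < ε := by
  rw [limitingNormal, mem_setLimsup_iff]
  refine forall₂_congr fun ε hε => ?_
  rw [frequently_nhdsWithin_set_iff]

lemma npolar_smul_mem {S : Set H} {p : H} (h : p ∈ npolar S) {c : ℝ} (hc : 0 ≤ c) :
    c • p ∈ npolar S := by
  intro s hs
  rw [real_inner_smul_left]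
  exact mul_nonpos_of_nonneg_of_nonpos hc (h s hs)

lemma zero_mem_npolar {S : Set H} : (0 : H) ∈ npolar S := by
  intro s hs
  simp

lemma prox_normal_mem_npolar {E : Set H} {z e : H} (he : e ∈ E)
    (hmin : ∀ e' ∈ E, dist z e ≤ dist z e') : (z - e) ∈ npolar (bouligand E e) := by
  intro u hu
  rw [mem_bouligand_iff] at hu
  have hA : (0:ℝ) ≤ (‖u‖ + 1)^2 / 2 + ‖z - e‖ := by positivity
  refine nonpos_of_small one_pos hA ?_
  intro δ hδ hδ1
  obtain ⟨t, ht0, htδ, e', he', hw⟩ := hu δ hδ δ hδ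
  set w := t⁻¹ • (e' - e) with hwdef
  have htw : t • w = e' - e := by
    rw [hwdef, smul_smul, mul_inv_cancel₀ ht0.ne', one_smul]
  have h1 : ‖z - e‖ ≤ ‖z - e'‖ := by
    rw [← dist_eq_norm, ← dist_eq_norm]; exact hmin e' he'
  have h2 : 2 * (inner ℝ (z - e) (e' - e) : ℝ) ≤ ‖e' - e‖^2 := by
    have hn := norm_sub_sq_real (z - e) (e' - e)
    have h3 : z - e - (e' - e) = z - e' := by abel
    rw [h3] at hn
    nlinarith [norm_nonneg (z - e), norm_nonneg (z - e')]
  have h6 : ‖e' - e‖^2 = t^2 * ‖w‖^2 := by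
    rw [← htw, norm_smul, Real.norm_eq_abs, abs_of_pos ht0, mul_pow]
  have h5 : (inner ℝ (z - e) (e' - e) : ℝ) = t * inner ℝ (z - e) w := by
    rw [← htw, real_inner_smul_right]
  have h4 : (inner ℝ (z - e) w : ℝ) ≤ t * ‖w‖^2 / 2 := by nlinarith
  have hdu : ‖u - w‖ < δ := by rw [← dist_eq_norm]; exact hw
  have hwn : ‖w‖ ≤ ‖u‖ + 1 := by
    calc ‖w‖ = ‖u - (u - w)‖ := by congr 1; abel
    _ ≤ ‖u‖ + ‖u - w‖ := norm_sub_le _ _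
    _ ≤ ‖u‖ + 1 := by linarith
  have hcs : (inner ℝ (z - e) (u - w) : ℝ) ≤ ‖z - e‖ * ‖u - w‖ := real_inner_le_norm _ _
  have hsplit : (inner ℝ (z - e) u : ℝ) = inner ℝ (z - e) w + inner ℝ (z - e) (u - w) := by
    rw [← inner_add_right]
    congr 1
    abel
  have htd : t ≤ δ := htδ.le
  have hnw : (0:ℝ) ≤ ‖w‖ := norm_nonneg _
  have hnz : (0:ℝ) ≤ ‖z - e‖ := norm_nonneg _
  rw [hsplit]
  have hw2 : ‖w‖^2 ≤ (‖u‖ + 1)^2 := by nlinarith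
  have hb1 : t * ‖w‖^2 ≤ δ * (‖u‖ + 1)^2 := mul_le_mul htd hw2 (sq_nonneg _) hδ.le
  have hb2 : ‖z - e‖ * ‖u - w‖ ≤ ‖z - e‖ * δ := by nlinarith
  have hring : δ * ((‖u‖ + 1)^2 / 2 + ‖z - e‖) = δ * (‖u‖ + 1)^2 / 2 + ‖z - e‖ * δ := by ring
  linarith

set_option maxHeartbeats 1000000 in
/-- The key analytic step: if the point `y + t • v` is at distance at least `ε * t` from `E`,
then near `y` there is a unit vector `p` normal to `E` at a point `e` close to `y`
with `⟪p, v⟫ ≥ ε / 4`. -/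
lemma main_step {E : Set H} (hE : IsClosed E) {v : H} {ε : ℝ} (hε : 0 < ε) {y : H}
    (hy : y ∈ E) {t : ℝ} (ht : 0 < t) (hd : ∀ e ∈ E, ε * t ≤ dist (y + t • v) e) :
    ∃ e ∈ E, ∃ p : H, dist e y ≤ t * (3 * ‖v‖ + ε) ∧ ‖p‖ = 1 ∧
      p ∈ npolar (bouligand E e) ∧ ε / 4 ≤ (inner ℝ p v : ℝ) := by
  have hEne : E.Nonempty := ⟨y, hy⟩
  have hεv : ε ≤ ‖v‖ := by
    have h1 := hd y hy
    have h2 : dist (y + t • v) y = t * ‖v‖ := by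
      rw [dist_eq_norm, add_sub_cancel_left, norm_smul, Real.norm_eq_abs, abs_of_pos ht]
    rw [h2] at h1
    have h3 : ε * t ≤ ‖v‖ * t := by linarith [h1]
    exact le_of_mul_le_mul_right h3 ht
  have hv0 : 0 < ‖v‖ := lt_of_lt_of_le hε hεv
  set c : ℝ := ε / 2 with hcdef
  have hc : 0 < c := by rw [hcdef]; positivity
  clear_value c
  set g : ℝ → ℝ := fun s => infDist (y + s • v) E with hgdef
  have hgcont : Continuous g := by
    rw [hgdef]
    exact (continuous_infDist_pt E).comp
      (continuous_const.add (continuous_id.smul continuous_const))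
  have hg0 : g 0 = 0 := by
    simp only [hgdef, zero_smul, add_zero]
    exact infDist_zero_of_mem hy
  have hgt : ε * t ≤ g t := by
    rw [hgdef]
    by_contra hlt
    push_neg at hlt
    obtain ⟨e, heE, hde⟩ := (infDist_lt_iff hEne).mp hlt
    exact absurd (hd e heE) (not_le.mpr hde)
  have hgub : ∀ a b : H, infDist a E ≤ infDist b E + dist a b := fun a b =>
    infDist_le_infDist_add_dist
  clear_value g
  -- the last exit time from the region where `g s ≤ c * s`
  set A : Set ℝ := Icc 0 t ∩ {s | g s ≤ c * s} with hAdef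
  have hAcomp : IsCompact A := by
    rw [hAdef]
    exact isCompact_Icc.inter_right
      (isClosed_le hgcont (continuous_const.mul continuous_id))
  have h0A : (0:ℝ) ∈ A := by
    rw [hAdef]
    exact ⟨⟨le_rfl, ht.le⟩, by simp [hg0]⟩
  have hAmem : ∀ s : ℝ, s ∈ A ↔ (0 ≤ s ∧ s ≤ t) ∧ g s ≤ c * s := by
    intro s
    rw [hAdef]
    rfl
  clear_value A
  set s₁ : ℝ := sSup A with hs₁def
  have hs₁A : s₁ ∈ A := hs₁def ▸ hAcomp.sSup_mem ⟨0, h0A⟩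
  have hs₁up : ∀ s ∈ A, s ≤ s₁ := fun s hs => hs₁def ▸ le_csSup hAcomp.bddAbove hs
  clear_value s₁
  rw [hAmem] at hs₁A
  have hs₁0 : 0 ≤ s₁ := hs₁A.1.1
  have hgs₁ : g s₁ ≤ c * s₁ := hs₁A.2
  have hs₁t : s₁ < t := by
    rcases lt_or_eq_of_le hs₁A.1.2 with h | h
    · exact h
    · exfalso
      rw [h] at hgs₁
      nlinarith
  have hA_up : ∀ s : ℝ, s₁ < s → s ≤ t → c * s < g s := by
    intro s hs1 hs2
    by_contra hcon
    push_neg at hcon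
    have hsA : s ∈ A := (hAmem s).mpr ⟨⟨hs₁0.trans hs1.le, hs2⟩, hcon⟩
    exact absurd (hs₁up s hsA) (not_le.mpr hs1)
  -- project the exit point onto `E`
  obtain ⟨y', hy'E, hy'd⟩ := hE.exists_infDist_eq_dist hEne (y + s₁ • v)
  have hy'dist : dist (y + s₁ • v) y' ≤ c * s₁ := by
    rw [← hy'd]
    rw [hgdef] at hgs₁
    exact hgs₁
  set τ : ℝ := t - s₁ with hτdef
  have hτ : 0 < τ := by rw [hτdef]; linarith
  have hτt : τ ≤ t := by rw [hτdef]; linarith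
  have hsum : s₁ + τ = t := by rw [hτdef]; ring
  clear_value τ
  set G : ℝ → ℝ := fun σ => infDist (y' + σ • v) E with hGdef
  have hGcont : Continuous G := by
    rw [hGdef]
    exact (continuous_infDist_pt E).comp
      (continuous_const.add (continuous_id.smul continuous_const))
  have hGub : ∀ σ : ℝ, 0 ≤ σ → G σ ≤ σ * ‖v‖ := by
    intro σ hσ
    rw [hGdef]
    calc infDist (y' + σ • v) E ≤ dist (y' + σ • v) y' := infDist_le_dist_of_mem hy'E
    _ = σ * ‖v‖ := by
        rw [dist_eq_norm, add_sub_cancel_left, norm_smul, Real.norm_eq_abs, abs_of_nonneg hσ]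
  have hGdist : ∀ σ : ℝ, ∀ e' ∈ E, G σ ≤ dist (y' + σ • v) e' := by
    intro σ e' he'
    rw [hGdef]
    exact infDist_le_dist_of_mem he'
  have hGlb : ∀ σ : ℝ, 0 ≤ σ → σ ≤ τ → c * σ ≤ G σ := by
    intro σ hσ0 hστ
    rcases eq_or_lt_of_le hσ0 with h | h
    · rw [← h, mul_zero, hGdef]
      exact infDist_nonneg
    · have hvec : y + (s₁ + σ) • v = (y + s₁ • v) + σ • v := by
        rw [add_smul]; abel
      have h1 : g (s₁ + σ) ≤ G σ + dist (y + (s₁ + σ) • v) (y' + σ • v) := by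
        rw [hgdef, hGdef]
        exact infDist_le_infDist_add_dist
      have h2 : dist (y + (s₁ + σ) • v) (y' + σ • v) = dist (y + s₁ • v) y' := by
        rw [hvec, dist_add_right]
      have h3 : c * (s₁ + σ) < g (s₁ + σ) := hA_up _ (by linarith) (by linarith)
      rw [h2] at h1
      nlinarith [hy'dist]
  clear_value G
  clear hgdef hgcont hg0 hgt hgs₁ hA_up hAmem hAcomp h0A hs₁up hs₁A
  -- minimize `G σ - (c/2) σ` over `[σ₀, τ]`
  set σ₀ : ℝ := c * τ / (2 * (‖v‖ + 1)) with hσ₀def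
  have hσ₀pos : 0 < σ₀ := by rw [hσ₀def]; positivity
  have hσ₀val : σ₀ * (2 * (‖v‖ + 1)) = c * τ := by
    rw [hσ₀def]
    field_simp
  have hσ₀τ : σ₀ ≤ τ := by nlinarith [hσ₀val, hσ₀pos, hc, hτ, hεv, hv0]
  clear_value σ₀
  set F : ℝ → ℝ := fun σ => G σ - c / 2 * σ with hFdef
  have hFcont : Continuous F := by
    rw [hFdef]
    exact hGcont.sub (continuous_const.mul continuous_id)
  have hFval : ∀ σ : ℝ, F σ = G σ - c / 2 * σ := fun σ => by rw [hFdef]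
  clear_value F
  obtain ⟨σs, hσsmem, hσsmin⟩ :=
    isCompact_Icc.exists_isMinOn ⟨σ₀, le_rfl, hσ₀τ⟩ hFcont.continuousOn
  have hσs0 : σ₀ ≤ σs := hσsmem.1
  have hσsτ' : σs ≤ τ := hσsmem.2
  have hσspos : 0 < σs := hσ₀pos.trans_le hσs0
  have hFσ₀ : F σ₀ < c / 2 * τ := by
    rw [hFval]
    have h1 : G σ₀ ≤ σ₀ * ‖v‖ := hGub σ₀ hσ₀pos.le
    nlinarith [hσ₀val, hσ₀pos, hc, hτ]
  have hFτ : c / 2 * τ ≤ F τ := by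
    rw [hFval]
    have := hGlb τ hτ.le le_rfl
    linarith
  have hσsτ : σs < τ := by
    rcases lt_or_eq_of_le hσsτ' with h | h
    · exact h
    · exfalso
      have h1 : F σs ≤ F σ₀ := hσsmin ⟨le_rfl, hσ₀τ⟩
      rw [h] at h1
      linarith
  -- project `z := y' + σs • v` onto `E`; this gives the desired normal direction
  obtain ⟨e, heE, hed⟩ := hE.exists_infDist_eq_dist hEne (y' + σs • v)
  have hd0 : 0 < G σs := lt_of_lt_of_le (mul_pos hc hσspos) (hGlb σs hσspos.le hσsτ')
  set d : ℝ := G σs with hddef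
  set z : EuclideanSpace ℝ (Fin k) := y' + σs • v with hzdef
  have hedist : dist z e = d := by
    rw [hddef, hzdef, ← hed, hGdef]
  have hemin : ∀ e' ∈ E, dist z e ≤ dist z e' := by
    intro e' he'
    rw [hzdef, ← hed]
    exact infDist_le_dist_of_mem he'
  have hdd0 : 0 < d := by rw [hddef]; exact hd0
  have hGz : ∀ σ : ℝ, G σ ≤ dist (y' + σ • v) e := fun σ => hGdist σ e heE
  have hdub : d ≤ σs * ‖v‖ := by rw [hddef]; exact hGub σs hσspos.le
  have hFs : ∀ σ : ℝ, σ₀ ≤ σ → σ ≤ τ → d - c / 2 * σs ≤ G σ - c / 2 * σ := by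
    intro σ h1 h2
    have h3 : F σs ≤ F σ := hσsmin ⟨h1, h2⟩
    rw [hFval σs, hFval σ] at h3
    rw [hddef]
    linarith [h3]
  clear_value d z
  have hprox : (z - e) ∈ npolar (bouligand E e) := prox_normal_mem_npolar heE hemin
  -- the inner ℝ product bound
  have hinner : c * d / 2 ≤ (inner ℝ (z - e) v : ℝ) := by
    have hkey : ∀ δ : ℝ, 0 < δ → δ ≤ τ - σs →
        c * d / 2 - (inner ℝ (z - e) v : ℝ) ≤ δ * (‖v‖ ^ 2 / 2) := by
      intro δ hδ0 hδτ
      have h2 : d + c / 2 * δ ≤ G (σs + δ) := by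
        have := hFs (σs + δ) (by linarith) (by linarith)
        linarith
      have hvec : y' + (σs + δ) • v = z + δ • v := by
        rw [hzdef, add_smul]
        abel
      have h3 : G (σs + δ) ≤ dist (z + δ • v) e := by
        rw [← hvec]
        exact hGz (σs + δ)
      have h4 : d + c / 2 * δ ≤ ‖(z - e) + δ • v‖ := by
        have heq : z + δ • v - e = (z - e) + δ • v := by abel
        rw [← heq, ← dist_eq_norm]
        linarith
      have h5 : ‖(z - e) + δ • v‖ ^ 2
          = d ^ 2 + 2 * (δ * (inner ℝ (z - e) v : ℝ)) + δ ^ 2 * ‖v‖ ^ 2 := by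
        rw [norm_add_sq_real, real_inner_smul_right, norm_smul, Real.norm_eq_abs,
          abs_of_pos hδ0, mul_pow, ← dist_eq_norm, hedist]
      have h6 : (d + c / 2 * δ) ^ 2 ≤ ‖(z - e) + δ • v‖ ^ 2 := by
        have hnn : 0 ≤ d + c / 2 * δ := by nlinarith [hdd0, mul_pos hc hδ0]
        nlinarith [norm_nonneg ((z - e) + δ • v), h4]
      rw [h5] at h6
      have h8 : c * d - 2 * (inner ℝ (z - e) v : ℝ) ≤ δ * ‖v‖ ^ 2 := by
        have hδ2 : 0 < δ * δ := mul_pos hδ0 hδ0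
        nlinarith [h6, hδ0, mul_pos hc hδ0]
      linarith
    have := nonpos_of_small (by linarith : (0:ℝ) < τ - σs) (by positivity) hkey
    linarith
  -- assemble the conclusion
  refine ⟨e, heE, d⁻¹ • (z - e), ?_, ?_, npolar_smul_mem hprox (inv_pos.mpr hdd0).le, ?_⟩
  · -- distance estimate
    have h1 : dist e z = d := by rw [dist_comm]; exact hedist
    have h2 : dist z y' = σs * ‖v‖ := by
      rw [hzdef, dist_eq_norm, add_sub_cancel_left, norm_smul, Real.norm_eq_abs,
        abs_of_pos hσspos]
    have h3 : dist y' y ≤ c * s₁ + s₁ * ‖v‖ := by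
      calc dist y' y ≤ dist y' (y + s₁ • v) + dist (y + s₁ • v) y := dist_triangle _ _ _
      _ ≤ c * s₁ + s₁ * ‖v‖ := by
          rw [dist_comm y' (y + s₁ • v)]
          have h4 : dist (y + s₁ • v) y = s₁ * ‖v‖ := by
            rw [dist_eq_norm, add_sub_cancel_left, norm_smul, Real.norm_eq_abs,
              abs_of_nonneg hs₁0]
          linarith [hy'dist]
    have hσst : σs ≤ t := by linarith
    have hs₁t' : s₁ ≤ t := hs₁t.le
    calc dist e y ≤ dist e z + dist z y' + dist y' y := dist_triangle4 _ _ _ _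
    _ ≤ σs * ‖v‖ + σs * ‖v‖ + (c * s₁ + s₁ * ‖v‖) := by
        rw [h1, h2]
        linarith
    _ ≤ t * (3 * ‖v‖ + ε) := by nlinarith [hv0, hc, hεv, ht, hσst, hs₁t', hs₁0, hσspos]
  · -- unit norm
    rw [norm_smul, Real.norm_eq_abs, abs_of_pos (inv_pos.mpr hdd0), ← dist_eq_norm, hedist]
    field_simp
  · -- inner ℝ product lower bound
    rw [real_inner_smul_left]
    have h9 : d⁻¹ * (inner ℝ (z - e) v : ℝ) - ε / 4
        = d⁻¹ * ((inner ℝ (z - e) v : ℝ) - c * d / 2) := by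
      rw [hcdef]
      field_simp
      ring
    have h10 : 0 ≤ d⁻¹ * ((inner ℝ (z - e) v : ℝ) - c * d / 2) :=
      mul_nonneg (inv_pos.mpr hdd0).le (by linarith)
    linarith

lemma npolar_limitingNormal_subset_clarke {E : Set H} (hE : IsClosed E) {x : H} (hx : x ∈ E) :
    npolar (limitingNormal E x) ⊆ clarkeTangent E x := by
  intro v hv
  by_contra hvc
  rw [clarkeTangent, not_mem_setLiminf_iff] at hvc
  obtain ⟨ε, hε, hfreq⟩ := hvc
  rw [frequently_prod_iff'] at hfreq
  -- for each `n`, find a point and a unit normal with inner ℝ product at least `ε / 4` with `v`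
  have hstep : ∀ n : ℕ, ∃ e ∈ E, ∃ p : EuclideanSpace ℝ (Fin k),
      dist e x ≤ ((n : ℝ) + 1)⁻¹ * (3 * ‖v‖ + ε + 1) ∧ ‖p‖ = 1 ∧
      p ∈ npolar (bouligand E e) ∧ ε / 4 ≤ (inner ℝ p v : ℝ) := by
    intro n
    have hn : (0:ℝ) < ((n : ℝ) + 1)⁻¹ := by positivity
    obtain ⟨t, ht0, htn, y, hyE, hyx, hfar⟩ := hfreq _ hn _ hn
    have hd : ∀ e ∈ E, ε * t ≤ dist (y + t • v) e := by
      intro e heE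
      have h1 : ε ≤ dist v (t⁻¹ • (e - y)) := hfar _ (mem_image_of_mem _ heE)
      have h2 : dist (y + t • v) e = t * dist v (t⁻¹ • (e - y)) := by
        rw [dist_eq_norm, dist_eq_norm, ← norm_smul_of_nonneg ht0.le]
        congr 1
        rw [smul_sub, smul_smul, mul_inv_cancel₀ ht0.ne', one_smul]
        abel
      rw [h2, mul_comm ε t]
      exact mul_le_mul_of_nonneg_left h1 ht0.le
    obtain ⟨e, heE, p, hdist, hnorm, hpol, hinner⟩ := main_step hE hε hyE ht0 hd
    refine ⟨e, heE, p, ?_, hnorm, hpol, hinner⟩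
    have h3 : dist e x ≤ dist e y + dist y x := dist_triangle _ _ _
    have h4 : t * (3 * ‖v‖ + ε) ≤ ((n : ℝ) + 1)⁻¹ * (3 * ‖v‖ + ε) := by
      apply mul_le_mul_of_nonneg_right htn.le
      positivity
    have h5 : ((n : ℝ) + 1)⁻¹ * (3 * ‖v‖ + ε + 1)
        = ((n : ℝ) + 1)⁻¹ * (3 * ‖v‖ + ε) + ((n : ℝ) + 1)⁻¹ := by ring
    rw [h5]
    linarith
  choose e heE p hdist hnorm hpol hinner using hstep
  have hpmem : ∀ n, p n ∈ Metric.sphere (0 : EuclideanSpace ℝ (Fin k)) 1 := fun n =>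
    mem_sphere_zero_iff_norm.mpr (hnorm n)
  obtain ⟨q, hqs, φ, hφ, hconv⟩ := (isCompact_sphere (0 : EuclideanSpace ℝ (Fin k)) 1).tendsto_subseq hpmem
  have hq_inner : ε / 4 ≤ (inner ℝ q v : ℝ) := by
    have hcont : Tendsto (fun n => (inner ℝ (p (φ n)) v : ℝ)) atTop (𝓝 (inner ℝ q v : ℝ)) :=
      ((Continuous.inner continuous_id continuous_const).tendsto q).comp hconv
    exact ge_of_tendsto hcont (Eventually.of_forall fun n => hinner (φ n))
  have hezero : Tendsto (fun n : ℕ => ((n : ℝ) + 1)⁻¹ * (3 * ‖v‖ + ε + 1)) atTop (𝓝 0) := by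
    rw [show (0:ℝ) = 0 * (3 * ‖v‖ + ε + 1) by ring]
    apply Tendsto.mul_const
    exact tendsto_one_div_add_atTop_nhds_zero_nat.congr (by simp [one_div])
  have hqN : q ∈ limitingNormal E x := by
    rw [mem_limitingNormal_iff]
    intro ε' hε' r hr
    have h1 : ∀ᶠ n in atTop, dist (p (φ n)) q < ε' := Metric.tendsto_nhds.mp hconv ε' hε'
    have h2 : ∀ᶠ n in atTop, dist (e (φ n)) x < r := by
      have h3 : ∀ᶠ n : ℕ in atTop, ((n : ℝ) + 1)⁻¹ * (3 * ‖v‖ + ε + 1) < r :=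
        hezero.eventually_lt_const hr
      filter_upwards [h3] with n hn
      have h4 : dist (e (φ n)) x ≤ ((φ n : ℝ) + 1)⁻¹ * (3 * ‖v‖ + ε + 1) := hdist (φ n)
      have h5 : ((φ n : ℝ) + 1)⁻¹ ≤ ((n : ℝ) + 1)⁻¹ := by
        apply inv_anti₀ (by positivity)
        have hle : n ≤ φ n := hφ.le_apply
        have : ((n:ℝ)) ≤ ((φ n : ℕ) : ℝ) := Nat.cast_le.mpr hle
        linarith
      have h6 : ((φ n : ℝ) + 1)⁻¹ * (3 * ‖v‖ + ε + 1) ≤ ((n : ℝ) + 1)⁻¹ * (3 * ‖v‖ + ε + 1) := by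
        apply mul_le_mul_of_nonneg_right h5
        positivity
      linarith
    obtain ⟨n, hn1, hn2⟩ := (h1.and h2).exists
    exact ⟨e (φ n), heE _, hn2, p (φ n), hpol _, by rw [dist_comm]; exact hn1⟩
  have hcontr := hv q hqN
  rw [real_inner_comm] at hcontr
  linarith

lemma mem_bouligand_of_seq {E : Set H} {y w : H} {t : ℕ → ℝ} {u : ℕ → H}
    (ht0 : ∀ n, 0 < t n) (htlim : Tendsto t atTop (𝓝 0))
    (hu : ∀ n, ∃ e ∈ E, (t n)⁻¹ • (e - y) = u n)
    (hulim : Tendsto u atTop (𝓝 w)) : w ∈ bouligand E y := by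
  rw [mem_bouligand_iff]
  intro ε hε η hη
  have h1 : ∀ᶠ n in atTop, t n < η := htlim.eventually_lt_const hη
  have h2 : ∀ᶠ n in atTop, dist (u n) w < ε := Metric.tendsto_nhds.mp hulim ε hε
  obtain ⟨n, hn1, hn2⟩ := (h1.and h2).exists
  obtain ⟨e, he, heq⟩ := hu n
  exact ⟨t n, ht0 n, hn1, e, he, by rw [heq, dist_comm]; exact hn2⟩

lemma clarke_subset_npolar_limitingNormal {E : Set H} {x : H} (hx : x ∈ E) :
    clarkeTangent E x ⊆ npolar (limitingNormal E x) := by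
  intro v hv p hp
  have hA : (0:ℝ) ≤ ‖v‖ + ‖p‖ + 1 := by positivity
  refine nonpos_of_small one_pos hA ?_
  intro δ hδ hδ1
  rw [mem_clarke_iff] at hv
  obtain ⟨η, hη, r, hr, h⟩ := hv δ hδ
  rw [mem_limitingNormal_iff] at hp
  obtain ⟨y, hyE, hyx, q, hqC, hpq⟩ := hp δ hδ r hr
  -- construct a sequence of quotients converging to a point near `v` in the Bouligand cone
  have hseq : ∀ n : ℕ, ∃ e ∈ E, dist v ((η / (n + 2))⁻¹ • (e - y)) < δ := by
    intro n
    refine h (η / (n + 2)) (by positivity) ?_ y hyE hyx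
    rw [div_lt_iff₀ (by positivity)]
    nlinarith
  choose e he hde using hseq
  set u : ℕ → H := fun n => (η / (n + 2))⁻¹ • (e n - y) with hudef
  have humem : ∀ n, u n ∈ closedBall v δ := fun n => by
    rw [mem_closedBall, dist_comm]; exact (hde n).le
  obtain ⟨w, hwball, φ, hφ, hconv⟩ := (isCompact_closedBall v δ).tendsto_subseq humem
  have hwmem : w ∈ bouligand E y := by
    refine mem_bouligand_of_seq (t := fun n => η / (φ n + 2)) (u := fun n => u (φ n))
      (fun n => by positivity) ?_ (fun n => ⟨e (φ n), he _, rfl⟩) hconv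
    have : Tendsto (fun n : ℕ => η / (n + 2 : ℝ)) atTop (𝓝 0) := by
      apply Tendsto.div_atTop (tendsto_const_nhds)
      exact tendsto_atTop_add_const_right _ _ tendsto_natCast_atTop_atTop
    exact this.comp (hφ.tendsto_atTop)
  have hqw : (inner ℝ q w : ℝ) ≤ 0 := hqC w hwmem
  have hsplit : (inner ℝ v p : ℝ) = inner ℝ q w + inner ℝ (p - q) v + inner ℝ q (v - w) := by
    rw [inner_sub_left, inner_sub_right, real_inner_comm v p]
    ring
  have hb1 : (inner ℝ (p - q) v : ℝ) ≤ ‖p - q‖ * ‖v‖ := real_inner_le_norm _ _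
  have hb2 : (inner ℝ q (v - w) : ℝ) ≤ ‖q‖ * ‖v - w‖ := real_inner_le_norm _ _
  have hpq' : ‖p - q‖ ≤ δ := by rw [← dist_eq_norm]; exact hpq.le
  have hvw : ‖v - w‖ ≤ δ := by
    rw [← dist_eq_norm, dist_comm]
    exact mem_closedBall.mp hwball
  have hq : ‖q‖ ≤ ‖p‖ + 1 := by
    calc ‖q‖ = ‖p - (p - q)‖ := by congr 1; abel
    _ ≤ ‖p‖ + ‖p - q‖ := norm_sub_le _ _
    _ ≤ ‖p‖ + 1 := by linarith
  have hb1' : (inner ℝ (p - q) v : ℝ) ≤ δ * ‖v‖ := by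
    calc (inner ℝ (p - q) v : ℝ) ≤ ‖p - q‖ * ‖v‖ := hb1
    _ ≤ δ * ‖v‖ := mul_le_mul_of_nonneg_right hpq' (norm_nonneg _)
  have hb2' : (inner ℝ q (v - w) : ℝ) ≤ (‖p‖ + 1) * δ := by
    calc (inner ℝ q (v - w) : ℝ) ≤ ‖q‖ * ‖v - w‖ := hb2
    _ ≤ (‖p‖ + 1) * δ := mul_le_mul hq hvw (norm_nonneg _) (by positivity)
  have hring : δ * (‖v‖ + ‖p‖ + 1) = δ * ‖v‖ + (‖p‖ + 1) * δ := by ring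
  linarith

lemma clarke_subset_bouligand {E : Set H} {x : H} (hx : x ∈ E) :
    clarkeTangent E x ⊆ bouligand E x := by
  intro v hv
  rw [mem_clarke_iff] at hv
  rw [mem_bouligand_iff]
  intro ε hε η hη
  obtain ⟨η', hη', r, hr, h⟩ := hv ε hε
  set t := min η η' / 2 with htdef
  have ht0 : 0 < t := by positivity
  have ht1 : t < η := by
    have := min_le_left η η'
    simp only [htdef]
    linarith
  have ht2 : t < η' := by
    have := min_le_right η η'
    simp only [htdef]
    linarith
  obtain ⟨e, he, hd⟩ := h t ht0 ht2 x hx (by simpa using hr)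
  exact ⟨t, ht0, ht1, e, he, hd⟩

lemma limitingNormal_zero_mem {E : Set H} {x : H} (hx : x ∈ E) :
    (0 : H) ∈ limitingNormal E x := by
  rw [mem_limitingNormal_iff]
  intro ε hε r hr
  exact ⟨x, hx, by simpa using hr, 0, zero_mem_npolar, by simpa using hε⟩

lemma limitingNormal_smul_mem {E : Set H} {x p : H} (hp : p ∈ limitingNormal E x)
    {c : ℝ} (hc : 0 < c) : c • p ∈ limitingNormal E x := by
  rw [mem_limitingNormal_iff] at hp ⊢
  intro ε hε r hr
  obtain ⟨y, hy, hyx, q, hq, hpq⟩ := hp (ε / c) (by positivity) r hr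
  refine ⟨y, hy, hyx, c • q, npolar_smul_mem hq hc.le, ?_⟩
  rw [dist_smul₀, Real.norm_eq_abs, abs_of_pos hc]
  calc c * dist p q < c * (ε / c) := by
        exact mul_lt_mul_of_pos_left hpq hc
    _ = ε := by field_simp

lemma npolar_npolar_eq {S : Set H} (h0 : (0:H) ∈ S)
    (hs : ∀ p ∈ S, ∀ c : ℝ, 0 < c → c • p ∈ S) :
    npolar (npolar S) = closure (convexHull ℝ S) := by
  set K : Set H := closure (convexHull ℝ S) with hK
  have hKconv : Convex ℝ K := (convex_convexHull ℝ S).closure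
  have hKclosed : IsClosed K := isClosed_closure
  have hKne : (K : Set H).Nonempty := ⟨0, subset_closure (subset_convexHull ℝ S h0)⟩
  have hKsmul : ∀ c : ℝ, 0 < c → ∀ z ∈ K, c • z ∈ K := by
    intro c hc z hz
    have h1 : c • S ⊆ S := by
      rintro _ ⟨s, hsS, rfl⟩
      exact hs s hsS c hc
    have hc1 : (c • ·) '' (convexHull ℝ S) ⊆ convexHull ℝ S := by
      rw [Set.image_smul, ← convexHull_smul]
      exact convexHull_mono h1
    have himg : (c • ·) '' K ⊆ K :=
      (image_closure_subset_closure_image (continuous_const_smul c)).trans (closure_mono hc1)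
    exact himg (mem_image_of_mem _ hz)
  have hKadd : ∀ z1 ∈ K, ∀ z2 ∈ K, z1 + z2 ∈ K := by
    intro z1 h1 z2 h2
    have hmid : (1/2 : ℝ) • z1 + (1/2 : ℝ) • z2 ∈ K :=
      hKconv h1 h2 (by norm_num) (by norm_num) (by norm_num)
    have h3 := hKsmul 2 (by norm_num) _ hmid
    have h4 : (2:ℝ) • ((1/2 : ℝ) • z1 + (1/2 : ℝ) • z2) = z1 + z2 := by
      rw [smul_add, smul_smul, smul_smul]
      norm_num
    rwa [h4] at h3
  let K' : ConvexCone ℝ (EuclideanSpace ℝ (Fin k)) :=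
    ⟨K, fun c hc x hx => hKsmul c hc x hx, fun x hx y hy => hKadd x hx y hy⟩
  have hNP : ∀ A : Set H, npolar A = -((ProperCone.innerDual A : Set H)) := by
    intro A
    ext p
    simp only [npolar, mem_setOf_eq, Set.mem_neg, SetLike.mem_coe, ProperCone.mem_innerDual]
    constructor
    · intro h x hx
      rw [inner_neg_right]
      have := h x hx
      rw [real_inner_comm] at this
      linarith
    · intro h s hsA
      have := @h s hsA
      rw [inner_neg_right] at this
      rw [real_inner_comm]
      linarith
  have hneg : ∀ A : Set H, ((ProperCone.innerDual (-A) : Set H)) = -((ProperCone.innerDual A : Set H)) := by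
    intro A
    ext y
    simp only [SetLike.mem_coe, ProperCone.mem_innerDual, Set.mem_neg]
    constructor
    · intro h z hz
      have := @h (-z) (by simpa using hz)
      rw [inner_neg_left] at this
      rw [inner_neg_right]
      linarith
    · intro h z hz
      have := @h (-z) hz
      rw [inner_neg_right, inner_neg_left, neg_neg] at this
      exact this
  have hpol : npolar S = npolar K := by
    apply Set.Subset.antisymm
    · intro p hp z hz
      have hTconv : Convex ℝ {w : EuclideanSpace ℝ (Fin k) | (inner ℝ p w : ℝ) ≤ 0} := by
        refine convex_halfSpace_le ⟨fun a b => inner_add_right _ _ _, fun c a => ?_⟩ 0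
        exact real_inner_smul_right _ _ _
      have hTclosed : IsClosed {w : EuclideanSpace ℝ (Fin k) | (inner ℝ p w : ℝ) ≤ 0} :=
        isClosed_le (Continuous.inner continuous_const continuous_id) continuous_const
      exact closure_minimal (convexHull_min (fun s hs' => hp s hs') hTconv) hTclosed hz
    · intro p hp s hsS
      exact hp s (subset_closure (subset_convexHull ℝ S hsS))
  let C : ProperCone ℝ H :=
    ⟨K'.toPointedCone (show (0:H) ∈ K from subset_closure (subset_convexHull ℝ S h0)), hKclosed⟩
  have hbip := ProperCone.innerDual_innerDual C
  have hbip' : (ProperCone.innerDual (ProperCone.innerDual (K : Set H) : Set H) : Set H) = K := by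
    have : ((C : ProperCone ℝ H) : Set H) = K := rfl
    rw [← this]
    exact congrArg SetLike.coe hbip
  rw [hpol, hNP K, hNP, hneg, neg_neg, hbip']

/-- For a closed set `E` and `x ∈ E`: `T^C_E(x) = (N_E(x))⁻ ⊆ T_E(x)` and
`(T^C_E(x))⁻ = cl co N_E(x)`. -/
theorem stmt11 {k : ℕ} (E : Set (EuclideanSpace ℝ (Fin k))) (hE : IsClosed E)
    (x : EuclideanSpace ℝ (Fin k)) (hx : x ∈ E) :
    clarkeTangent E x = npolar (limitingNormal E x) ∧
      clarkeTangent E x ⊆ bouligand E x ∧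
      npolar (clarkeTangent E x) = closure (convexHull ℝ (limitingNormal E x)) := by
  have h1 : clarkeTangent E x = npolar (limitingNormal E x) :=
    le_antisymm (clarke_subset_npolar_limitingNormal hx)
      (npolar_limitingNormal_subset_clarke hE hx)
  refine ⟨h1, clarke_subset_bouligand hx, ?_⟩
  rw [h1]
  exact npolar_npolar_eq (limitingNormal_zero_mem hx)
    (fun p hp c hc => limitingNormal_smul_mem hp hc)
end
end
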